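/- Suppose (H₀) holds, h is a Bregman function with zone C, f is convex and C¹ with locally Lipschitz gradient, the minimizer of f over cl F is unique, say S(P) = {a}, and the growth condition holds: there are α > 0, β ≥ 1 and a neighborhood U_a of a with f(x) − f(a) ≥ α D_h(a, x)^β for all x ∈ U_a ∩ cl C where D_h(a,·) is defined. Let x : [0, ∞) → F be the global solution of the steepest descent equation ẋ(t) = −∇²h(x(t))⁻¹[I − Aᵀ(A∇²h(x(t))⁻¹Aᵀ)⁻¹A∇²h(x(t))⁻¹]∇f(x(t)). Then: if β = 1 there exists K > 0 such that D_h(a, x(t)) ≤ K e^{−αt} for all t > 0; if β > 1 there exists K' > 0 such that D_h(a, x(t)) ≤ K'/t^{1/(β−1)} for all t > 0. -/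

import Mathlib

noncomputable section
open Set Filter Topology Matrix MeasureTheory

abbrev E (n : ℕ) := EuclideanSpace ℝ (Fin n)

/-- Action of a matrix on a vector of `EuclideanSpace ℝ (Fin n)`. -/
def matVec {n : ℕ} (M : Matrix (Fin n) (Fin n) ℝ) (v : E n) : E n := WithLp.toLp 2 (M.mulVec v)

/-- The continuous linear map on Euclidean space associated with a matrix. -/
def matCLM {n : ℕ} (M : Matrix (Fin n) (Fin n) ℝ) : E n →L[ℝ] E n :=
  LinearMap.toContinuousLinearMap (Matrix.toEuclideanLin M)

/-- The steepest descent vector field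
`x ↦ −H(x)⁻¹[I − Aᵀ(A H(x)⁻¹ Aᵀ)⁻¹ A H(x)⁻¹] g(x)` for the Hessian metric. -/
def sdVF {n m : ℕ} (A : Matrix (Fin m) (Fin n) ℝ)
    (Hess : E n → Matrix (Fin n) (Fin n) ℝ) (g : E n → E n) (x : E n) : E n :=
  -(matVec ((Hess x)⁻¹ * (1 - Aᵀ * (A * (Hess x)⁻¹ * Aᵀ)⁻¹ * A * (Hess x)⁻¹)) (g x))

/-- The `D`-function (Bregman distance) of `h`: `D_h(a,y) = h(a) − h(y) − ⟨∇h(y), a − y⟩`. -/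
def Dh {n : ℕ} (h : E n → ℝ) (a y : E n) : ℝ :=
  h a - h y - (inner ℝ (gradient h y) (a - y) : ℝ)

/- ### Auxiliary lemmas -/

lemma innerE {k : ℕ} (x y : E k) : (inner ℝ x y : ℝ) = (fun i => x i) ⬝ᵥ (fun i => y i) := by
  simp [PiLp.inner_apply, RCLike.inner_apply, dotProduct, mul_comm]

lemma matCLM_apply {k : ℕ} (M : Matrix (Fin k) (Fin k) ℝ) (v : E k) :
    matCLM M v = matVec M v := rfl

lemma grad_eq_fderiv {k : ℕ} (φ : E k → ℝ) (p v : E k) :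
    (inner ℝ (gradient φ p) v : ℝ) = fderiv ℝ φ p v := by
  rw [gradient, InnerProductSpace.toDual_symm_apply]

/-- Gradient inequality for a convex function on a convex set. -/
lemma gradIneq {k : ℕ} {s : Set (E k)} {φ : E k → ℝ} (hconv : ConvexOn ℝ s φ)
    {p q : E k} (hp : p ∈ s) (hq : q ∈ s) (hd : DifferentiableAt ℝ φ p) :
    φ p + (inner ℝ (gradient φ p) (q - p) : ℝ) ≤ φ q := by
  set v := q - p with hv
  have hline : ∀ t : ℝ, HasDerivAt (fun t : ℝ => p + t • v) v t := by
    intro t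
    simpa using ((hasDerivAt_id t).smul_const v).const_add p
  set ψ : ℝ → ℝ := fun t => φ (p + t • v) with hψ
  have hdψ : HasDerivAt ψ (fderiv ℝ φ p v) 0 := by
    have h0 : HasFDerivAt φ (fderiv ℝ φ p) (p + (0:ℝ) • v) := by
      simpa using hd.hasFDerivAt
    exact h0.comp_hasDerivAt 0 (hline 0)
  have hψ0 : ψ 0 = φ p := by simp [hψ]
  have hψ1 : ψ 1 = φ q := by simp [hψ, hv]
  have hslope : ∀ t : ℝ, t ∈ Ioc (0:ℝ) 1 → slope ψ 0 t ≤ ψ 1 - ψ 0 := by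
    intro t ht
    have h1 : ψ t ≤ (1 - t) * φ p + t * φ q := by
      have := hconv.2 hp hq (by linarith [ht.2] : (0:ℝ) ≤ 1 - t) ht.1.le (by ring)
      have heq : (1 - t) • p + t • q = p + t • v := by
        simp [hv, smul_sub, sub_smul]; module
      simpa [heq, smul_eq_mul] using this
    rw [slope_def_field, div_le_iff₀ (by simpa using ht.1)]
    rw [hψ0, hψ1]
    nlinarith [ht.1.le]
  have htend : Tendsto (slope ψ 0) (𝓝[>] (0:ℝ)) (𝓝 (fderiv ℝ φ p v)) := by
    have := hasDerivAt_iff_tendsto_slope.mp hdψ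
    exact this.mono_left (nhdsWithin_mono _ (fun x hx => ne_of_gt hx))
  have hev : ∀ᶠ t in 𝓝[>] (0:ℝ), slope ψ 0 t ≤ ψ 1 - ψ 0 := by
    filter_upwards [Ioc_mem_nhdsGT one_pos] with t ht using hslope t ht
  have hle := le_of_tendsto htend hev
  rw [grad_eq_fderiv]
  rw [hψ0, hψ1] at hle
  linarith

lemma alg0 {n m : ℕ} (A : Matrix (Fin m) (Fin n) ℝ) (N : Matrix (Fin m) (Fin m) ℝ)
    (Hi : Matrix (Fin n) (Fin n) ℝ) (g w : Fin n → ℝ) (hw : A *ᵥ w = 0) :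
    ((1 - Aᵀ * N * A * Hi) *ᵥ g) ⬝ᵥ w = g ⬝ᵥ w := by
  rw [Matrix.sub_mulVec, sub_dotProduct, Matrix.one_mulVec]
  suffices hz : ((Aᵀ * N * A * Hi) *ᵥ g) ⬝ᵥ w = 0 by rw [hz, sub_zero]
  have : Aᵀ * N * A * Hi = Aᵀ * (N * A * Hi) := by
    rw [Matrix.mul_assoc, Matrix.mul_assoc, Matrix.mul_assoc]
  rw [this, ← Matrix.mulVec_mulVec, Matrix.mulVec_transpose, ← Matrix.dotProduct_mulVec,
    hw, dotProduct_zero]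

/-- Key identity: `⟪H(p)·sdVF(p), a−p⟫ = −⟪g(p), a−p⟫` when `A a = A p = b`. -/
lemma key_alg {n m : ℕ} (A : Matrix (Fin m) (Fin n) ℝ) (b : Fin m → ℝ)
    (Hess : E n → Matrix (Fin n) (Fin n) ℝ) (g : E n → E n) (p a : E n)
    (hab : A.mulVec (fun i => a i) = b) (hpb : A.mulVec (fun i => p i) = b)
    (hdet : IsUnit (Hess p).det) :
    (inner ℝ (matVec (Hess p) (sdVF A Hess g p)) (a - p) : ℝ) = -(inner ℝ (g p) (a - p) : ℝ) := by
  have hAv : A *ᵥ ((fun i => a i) - (fun i => p i)) = 0 := by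
    rw [Matrix.mulVec_sub, hab, hpb, sub_self]
  rw [innerE, innerE]
  show ((Hess p) *ᵥ (-(((Hess p)⁻¹ * (1 - Aᵀ * (A * (Hess p)⁻¹ * Aᵀ)⁻¹ * A * (Hess p)⁻¹)) *ᵥ
      (fun i => g p i)))) ⬝ᵥ ((fun i => a i) - (fun i => p i))
    = -((fun i => g p i) ⬝ᵥ ((fun i => a i) - (fun i => p i)))
  rw [Matrix.mulVec_neg, neg_dotProduct, Matrix.mulVec_mulVec, ← Matrix.mul_assoc,
    Matrix.mul_nonsing_inv _ hdet, Matrix.one_mul, alg0 A _ _ _ _ hAv]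

/-- Derivative of the Bregman distance along the steepest-descent trajectory. -/
lemma hasDerivAt_D {n m : ℕ} (A : Matrix (Fin m) (Fin n) ℝ) (b : Fin m → ℝ)
    (h f : E n → ℝ) (Hess : E n → Matrix (Fin n) (Fin n) ℝ)
    (x : ℝ → E n) (t : ℝ) (a : E n)
    (hdh : DifferentiableAt ℝ h (x t))
    (hH : HasFDerivAt (gradient h) (matCLM (Hess (x t))) (x t))
    (hx : HasDerivAt x (sdVF A Hess (gradient f) (x t)) t)
    (hab : A.mulVec (fun i => a i) = b) (hpb : A.mulVec (fun i => x t i) = b)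
    (hdet : IsUnit (Hess (x t)).det) :
    HasDerivAt (fun s => Dh h a (x s)) (inner ℝ (gradient f (x t)) (a - x t) : ℝ) t := by
  set p := x t with hp
  set w := sdVF A Hess (gradient f) p with hw
  have d1 : HasDerivAt (fun s => h (x s)) (inner ℝ (gradient h p) w : ℝ) t := by
    rw [grad_eq_fderiv]
    exact (hdh.hasFDerivAt).comp_hasDerivAt t hx
  have d2 : HasDerivAt (fun s => gradient h (x s)) (matCLM (Hess p) w) t :=
    hH.comp_hasDerivAt t hx
  have d3 : HasDerivAt (fun s => a - x s) (-w) t := hx.const_sub a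
  have d4 : HasDerivAt (fun s => (inner ℝ (gradient h (x s)) (a - x s) : ℝ))
      ((inner ℝ (gradient h p) (-w) : ℝ) + (inner ℝ (matCLM (Hess p) w) (a - p) : ℝ)) t :=
    HasDerivAt.inner ℝ d2 d3
  have d5 : HasDerivAt (fun s => Dh h a (x s))
      (-(inner ℝ (gradient h p) w : ℝ) -
        ((inner ℝ (gradient h p) (-w) : ℝ) + (inner ℝ (matCLM (Hess p) w) (a - p) : ℝ))) t := by
    unfold Dh
    exact (d1.const_sub (h a)).sub d4
  have heq : (-(inner ℝ (gradient h p) w : ℝ) -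
        ((inner ℝ (gradient h p) (-w) : ℝ) + (inner ℝ (matCLM (Hess p) w) (a - p) : ℝ)))
      = (inner ℝ (gradient f p) (a - p) : ℝ) := by
    rw [inner_neg_right, matCLM_apply, key_alg A b Hess (gradient f) p a hab hpb hdet]
    ring
  rw [← heq]
  exact d5

lemma antitoneOn_hasDeriv {G d : ℝ → ℝ} {s : Set ℝ} (hs : Convex ℝ s)
    (hd : ∀ t ∈ s, HasDerivAt G (d t) t) (hneg : ∀ t ∈ interior s, d t ≤ 0) :
    AntitoneOn G s :=
  antitoneOn_of_deriv_nonpos hs (fun t ht => (hd t ht).continuousAt.continuousWithinAt)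
    (fun t ht => ((hd t (interior_subset ht)).differentiableAt).differentiableWithinAt)
    (fun t ht => by rw [(hd t (interior_subset ht)).deriv]; exact hneg t ht)

lemma monotoneOn_hasDeriv {G d : ℝ → ℝ} {s : Set ℝ} (hs : Convex ℝ s)
    (hd : ∀ t ∈ s, HasDerivAt G (d t) t) (hpos : ∀ t ∈ interior s, 0 ≤ d t) :
    MonotoneOn G s :=
  monotoneOn_of_deriv_nonneg hs (fun t ht => (hd t ht).continuousAt.continuousWithinAt)
    (fun t ht => ((hd t (interior_subset ht)).differentiableAt).differentiableWithinAt)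
    (fun t ht => by rw [(hd t (interior_subset ht)).deriv]; exact hpos t ht)

/-- Bregman cluster point lemma. -/
lemma cluster_eq {n : ℕ} {C : Set (E n)} {h : E n → ℝ}
    (hstrict : StrictConvexOn ℝ (closure C) h)
    (hcont : ContinuousOn h (closure C))
    (hdiff : ∀ p ∈ C, DifferentiableAt ℝ h p)
    (hBlim : ∀ y ∈ closure C, ∀ yseq : ℕ → E n, (∀ j, yseq j ∈ C) →
      Tendsto yseq atTop (𝓝 y) → Tendsto (fun j => Dh h y (yseq j)) atTop (𝓝 0))
    {a z : E n} (ha : a ∈ closure C) (hz : z ∈ closure C)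
    (y : ℕ → E n) (hyC : ∀ j, y j ∈ C) (hyz : Tendsto y atTop (𝓝 z))
    (hD0 : Tendsto (fun j => Dh h a (y j)) atTop (𝓝 0)) : z = a := by
  by_contra hne
  have h2 : Tendsto (fun j => Dh h z (y j)) atTop (𝓝 0) := hBlim z hz y hyC hyz
  have h3 : Tendsto (fun j => h (y j)) atTop (𝓝 (h z)) := by
    apply (hcont z hz).tendsto.comp
    rw [tendsto_nhdsWithin_iff]
    exact ⟨hyz, Eventually.of_forall fun j => subset_closure (hyC j)⟩
  have e1 : ∀ j, (inner ℝ (gradient h (y j)) (z - y j) : ℝ) = h z - h (y j) - Dh h z (y j) := by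
    intro j; simp only [Dh]; ring
  have e2 : ∀ j, (inner ℝ (gradient h (y j)) (a - y j) : ℝ) = h a - h (y j) - Dh h a (y j) := by
    intro j; simp only [Dh]; ring
  have t1 : Tendsto (fun j => (inner ℝ (gradient h (y j)) (z - y j) : ℝ)) atTop (𝓝 0) := by
    simp only [e1]
    have := (tendsto_const_nhds (x := h z)).sub h3 |>.sub h2
    simpa using this
  have t2 : Tendsto (fun j => (inner ℝ (gradient h (y j)) (a - y j) : ℝ)) atTop (𝓝 (h a - h z)) := by
    simp only [e2]
    have := ((tendsto_const_nhds (x := h a)).sub h3).sub hD0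
    simpa using this
  set w : E n := (1/2 : ℝ) • z + (1/2 : ℝ) • a with hw
  have hwmem : w ∈ closure C := (hstrict.1) hz ha (by norm_num) (by norm_num) (by norm_num)
  have hGI : ∀ j, h (y j) + (inner ℝ (gradient h (y j)) (w - y j) : ℝ) ≤ h w := fun j =>
    gradIneq hstrict.convexOn (subset_closure (hyC j)) hwmem (hdiff _ (hyC j))
  have hsplit : ∀ j, (inner ℝ (gradient h (y j)) (w - y j) : ℝ)
      = (1/2 : ℝ) * (inner ℝ (gradient h (y j)) (z - y j) : ℝ)
        + (1/2 : ℝ) * (inner ℝ (gradient h (y j)) (a - y j) : ℝ) := by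
    intro j
    have : w - y j = (1/2 : ℝ) • (z - y j) + (1/2 : ℝ) • (a - y j) := by
      rw [hw]; module
    rw [this, inner_add_right, real_inner_smul_right, real_inner_smul_right]
  have tLHS : Tendsto (fun j => h (y j) + (inner ℝ (gradient h (y j)) (w - y j) : ℝ))
      atTop (𝓝 (h z + ((1/2 : ℝ) * 0 + (1/2 : ℝ) * (h a - h z)))) := by
    apply h3.add
    simp only [hsplit]
    exact ((tendsto_const_nhds.mul t1)).add (tendsto_const_nhds.mul t2)
  have hle : h z + ((1/2 : ℝ) * 0 + (1/2 : ℝ) * (h a - h z)) ≤ h w :=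
    le_of_tendsto tLHS (Eventually.of_forall hGI)
  have hlt : h w < (1/2 : ℝ) * h z + (1/2 : ℝ) * h a := by
    have := hstrict.2 hz ha hne (by norm_num : (0:ℝ) < 1/2) (by norm_num : (0:ℝ) < 1/2)
      (by norm_num)
    simpa [hw, smul_eq_mul] using this
  linarith

/-- Power-decay comparison for differential inequality `D' ≤ −α D^β`, `β > 1`. -/
lemma power_decay {Df df : ℝ → ℝ} {T₀ α β : ℝ} (hβ : 1 < β) (hα : 0 < α)
    (hDeriv : ∀ t ∈ Ici T₀, HasDerivAt Df (df t) t)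
    (hanti : AntitoneOn Df (Ici T₀))
    (hdec : ∀ t ∈ Ici T₀, df t ≤ -α * Df t ^ β)
    {t₁ : ℝ} (ht₁ : T₀ < t₁) (hpos : 0 < Df t₁) :
    Df t₁ ≤ (α * (β - 1) * (t₁ - T₀)) ^ (-(1 / (β - 1))) := by
  have hposIcc : ∀ s ∈ Icc T₀ t₁, 0 < Df s := fun s hs =>
    lt_of_lt_of_le hpos (hanti (mem_Ici.mpr hs.1) (mem_Ici.mpr ht₁.le) hs.2)
  set G : ℝ → ℝ := fun s => Df s ^ (1 - β) with hG
  set Φ : ℝ → ℝ := fun s => G s - α * (β - 1) * s with hΦ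
  have hlin : ∀ s : ℝ, HasDerivAt (fun u : ℝ => α * (β - 1) * u) (α * (β - 1)) s := by
    intro s; simpa using (hasDerivAt_id s).const_mul (α * (β - 1))
  have hΦd : ∀ s ∈ Icc T₀ t₁,
      HasDerivAt Φ (df s * (1 - β) * Df s ^ (1 - β - 1) - α * (β - 1)) s := by
    intro s hs
    exact ((hDeriv s (mem_Ici.mpr hs.1)).rpow_const
      (Or.inl (ne_of_gt (hposIcc s hs)))).sub (hlin s)
  have hmono : MonotoneOn Φ (Icc T₀ t₁) := by
    apply monotoneOn_hasDeriv (convex_Icc _ _) hΦd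
    intro s hs
    rw [interior_Icc] at hs
    have hsIcc : s ∈ Icc T₀ t₁ := ⟨hs.1.le, hs.2.le⟩
    have hDs : 0 < Df s := hposIcc s hsIcc
    have h1 : Df s ^ (1 - β - 1) = Df s ^ (-β) := by norm_num
    have h2 : Df s ^ β * Df s ^ (-β) = 1 := by
      rw [← Real.rpow_add hDs]; simp
    have h3 : 0 < Df s ^ (-β) := Real.rpow_pos_of_pos hDs _
    have h4 := hdec s (mem_Ici.mpr hsIcc.1)
    have h5 := mul_le_mul_of_nonneg_right
      (mul_le_mul_of_nonpos_right h4 (by linarith : 1 - β ≤ 0)) h3.le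
    rw [h1]
    have h6 : -α * Df s ^ β * (1 - β) * Df s ^ (-β) = α * (β - 1) := by
      linear_combination (-α * (1 - β)) * h2
    linarith [h5, h6]
  have hkey := hmono (left_mem_Icc.mpr ht₁.le) (right_mem_Icc.mpr ht₁.le) ht₁.le
  have hGT₀ : 0 < G T₀ := Real.rpow_pos_of_pos (hposIcc T₀ (left_mem_Icc.mpr ht₁.le)) _
  have hc : 0 < α * (β - 1) * (t₁ - T₀) := by
    apply mul_pos (mul_pos hα (by linarith)) (by linarith)
  have hGc : α * (β - 1) * (t₁ - T₀) ≤ Df t₁ ^ (1 - β) := by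
    simp only [hΦ] at hkey
    have : G t₁ = Df t₁ ^ (1 - β) := rfl
    linarith [hkey, hGT₀]
  have hβ1 : β - 1 ≠ 0 := by linarith
  have hexp : (1 - β) * (-(1 / (β - 1))) = 1 := by
    field_simp
    ring
  calc Df t₁ = Df t₁ ^ ((1 - β) * (-(1 / (β - 1)))) := by rw [hexp, Real.rpow_one]
    _ = (Df t₁ ^ (1 - β)) ^ (-(1 / (β - 1))) := Real.rpow_mul hpos.le _ _
    _ ≤ (α * (β - 1) * (t₁ - T₀)) ^ (-(1 / (β - 1))) :=
        Real.rpow_le_rpow_of_nonpos hc hGc (by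
          have : 0 ≤ 1 / (β - 1) := le_of_lt (div_pos one_pos (by linarith))
          linarith)

set_option maxHeartbeats 1000000 in
/-- rate of convergence, Proposition `P:rate1`.  Suppose `h` is a
Bregman function with zone `C`, `f` is convex with unique minimizer `a` over `cl F`, and
the growth condition `f(x) − f(a) ≥ α D_h(a,x)^β` holds near `a`.  Then along the global
steepest descent trajectory, `D_h(a,x(t)) ≤ K e^{−αt}` if `β = 1`, and
`D_h(a,x(t)) ≤ K'/t^{1/(β−1)}` if `β > 1`. -/
theorem stmt12
    -- problem data: a full rank `m×n` matrix `A` (`m < n`), `b ∈ ℝᵐ`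
    {n m : ℕ} (hm : 0 < m) (hmn : m < n)
    (A : Matrix (Fin m) (Fin n) ℝ) (b : Fin m → ℝ) (hrank : A.rank = m)
    -- `C` is a nonempty open convex set, `F = C ∩ {x | Ax = b}` is nonempty
    (C : Set (E n)) (hCopen : IsOpen C) (hCconv : Convex ℝ C) (hCne : C.Nonempty)
    (hFne : (C ∩ {x | A.mulVec x = b}).Nonempty)
    (h : E n → ℝ) (Hess : E n → Matrix (Fin n) (Fin n) ℝ)
    -- `(H₀)`: `h` is of Legendre type with `int dom h = C`: it is strictly convex on `C`,
    -- `C²` on `C`, and its gradient blows up at the boundary of `C`;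
    -- its Hessian `Hess` is positive definite and locally Lipschitz on `C`
    (hhC2 : ContDiffOn ℝ 2 h C) (hhconv : ConvexOn ℝ C h) (hhstrict : StrictConvexOn ℝ C h)
    (hLeg : ∀ (z : ℕ → E n) (x' : E n), (∀ j, z j ∈ C) → x' ∈ frontier C →
      Tendsto z atTop (𝓝 x') → Tendsto (fun j => ‖gradient h (z j)‖) atTop atTop)
    (hHess : ∀ x ∈ C, HasFDerivAt (gradient h) (matCLM (Hess x)) x)
    (hHpos : ∀ x ∈ C, (Hess x).PosDef)
    (hHlip : ∀ x ∈ C, ∃ ε > 0, ∃ K : ℝ, ∀ y ∈ C ∩ Metric.ball x ε, ∀ z ∈ C ∩ Metric.ball x ε,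
      ‖matCLM (Hess y) - matCLM (Hess z)‖ ≤ K * ‖y - z‖)
    -- `f` is `C¹` with locally Lipschitz gradient
    (f : E n → ℝ) (hf : ContDiff ℝ 1 f)
    (hfgrad : ∀ x : E n, ∃ ε > 0, ∃ K : ℝ, ∀ y ∈ Metric.ball x ε, ∀ z ∈ Metric.ball x ε,
      ‖gradient f y - gradient f z‖ ≤ K * ‖y - z‖)
    -- `h` is a Bregman function with zone `C`
    (hBcont : ContinuousOn h (closure C)) (hBstrict : StrictConvexOn ℝ (closure C) h)
    (hBlevel : ∀ a ∈ closure C, ∀ γ : ℝ, Bornology.IsBounded {y ∈ C | Dh h a y ≤ γ})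
    (hBlim : ∀ y ∈ closure C, ∀ yseq : ℕ → E n, (∀ j, yseq j ∈ C) →
      Tendsto yseq atTop (𝓝 y) → Tendsto (fun j => Dh h y (yseq j)) atTop (𝓝 0))
    -- `f` is convex and has the unique minimizer `a` over `cl F`
    (hfconv : ConvexOn ℝ univ f)
    (a : E n)
    (hSP : {z ∈ closure (C ∩ {w | A.mulVec w = b}) |
      ∀ w ∈ closure (C ∩ {w | A.mulVec w = b}), f z ≤ f w} = {a})
    -- the growth condition `(GC)`
    (α β : ℝ) (hα : 0 < α) (hβ : 1 ≤ β) (U : Set (E n)) (hU : U ∈ 𝓝 a)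
    (hGC : ∀ z ∈ U ∩ C, f z - f a ≥ α * (Dh h a z) ^ β)
    -- the global trajectory
    (x : ℝ → E n) (x0 : E n) (hx0 : x 0 = x0) (hx0F : x0 ∈ C ∩ {z | A.mulVec z = b})
    (hmem : ∀ t ∈ Ici (0:ℝ), x t ∈ C ∩ {z | A.mulVec z = b})
    (hode : ∀ t ∈ Ici (0:ℝ), HasDerivAt x (sdVF A Hess (gradient f) (x t)) t) :
    (β = 1 → ∃ K > (0:ℝ), ∀ t : ℝ, 0 < t → Dh h a (x t) ≤ K * Real.exp (-α * t)) ∧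
    (1 < β → ∃ K' > (0:ℝ), ∀ t : ℝ, 0 < t → Dh h a (x t) ≤ K' / t ^ (1 / (β - 1))) := by
  -- the minimizer `a` belongs to `closure F` and minimizes `f` there
  have haSP : a ∈ {z ∈ closure (C ∩ {w | A.mulVec w = b}) |
      ∀ w ∈ closure (C ∩ {w | A.mulVec w = b}), f z ≤ f w} := by
    rw [hSP]; exact rfl
  obtain ⟨haclF, hamin⟩ := haSP
  -- the affine constraint set is closed
  have hAlin : Continuous (fun v : E n => A.mulVec v) := by
    let L : E n →ₗ[ℝ] (Fin m → ℝ) :=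
      { toFun := fun v => A.mulVec v
        map_add' := fun u v => Matrix.mulVec_add A u v
        map_smul' := fun c v => Matrix.mulVec_smul A c v }
    exact L.continuous_of_finiteDimensional
  have hclosedA : IsClosed {v : E n | A.mulVec v = b} :=
    isClosed_eq hAlin continuous_const
  have hclFsub : closure (C ∩ {w : E n | A.mulVec w = b}) ⊆ {v : E n | A.mulVec v = b} := by
    intro v hv
    exact hclosedA.closure_subset_iff.mpr (fun u hu => hu) (closure_mono inter_subset_right hv)
  have hAa : A.mulVec (fun i => a i) = b := hclFsub haclF
  have haclC : a ∈ closure C := closure_mono inter_subset_left haclF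
  -- differentiability of `h` on `C`
  have hdiffh : ∀ p ∈ C, DifferentiableAt ℝ h p := fun p hp =>
    (hhC2.differentiableOn two_ne_zero).differentiableAt (hCopen.mem_nhds hp)
  set D : ℝ → ℝ := fun t => Dh h a (x t) with hDdef
  set d : ℝ → ℝ := fun t => (inner ℝ (gradient f (x t)) (a - x t) : ℝ) with hddef
  have hDeriv : ∀ t ∈ Ici (0:ℝ), HasDerivAt D (d t) t := by
    intro t ht
    obtain ⟨htC, htb⟩ := hmem t ht
    exact hasDerivAt_D A b h f Hess x t a (hdiffh _ htC) (hHess _ htC) (hode t ht)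
      hAa htb (isUnit_iff_ne_zero.mpr (ne_of_gt (hHpos _ htC).det_pos))
  have hfa_le : ∀ t ∈ Ici (0:ℝ), f a ≤ f (x t) := fun t ht =>
    hamin _ (subset_closure (hmem t ht))
  have hdle : ∀ t ∈ Ici (0:ℝ), d t ≤ f a - f (x t) := by
    intro t ht
    have := gradIneq (s := univ) hfconv (mem_univ (x t)) (mem_univ a)
      ((hf.differentiable one_ne_zero) (x t))
    simp only [hddef]
    linarith
  have hdnonpos : ∀ t ∈ Ici (0:ℝ), d t ≤ 0 := fun t ht =>
    le_trans (hdle t ht) (by linarith [hfa_le t ht])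
  have hDanti : AntitoneOn D (Ici 0) := antitoneOn_hasDeriv (convex_Ici 0) hDeriv
    (fun t ht => hdnonpos t (interior_subset ht))
  have hDnonneg : ∀ t ∈ Ici (0:ℝ), 0 ≤ D t := by
    intro t ht
    have := gradIneq (s := closure C) hBstrict.convexOn
      (subset_closure (hmem t ht).1) haclC (hdiffh _ (hmem t ht).1)
    simp only [hDdef, Dh]
    linarith
  -- `f (x t)` gets arbitrarily close to `f a`
  have claim1 : ∀ ε > (0:ℝ), ∀ T ≥ (0:ℝ), ∃ t ≥ T, f (x t) - f a < ε := by
    intro ε hε T hT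
    by_contra hcon
    push_neg at hcon
    have hG : ∀ t ∈ Ici T, HasDerivAt (fun s => D s + ε * s) (d t + ε) t := by
      intro t ht
      exact (hDeriv t (mem_Ici.mpr (le_trans hT ht))).add
        (by simpa using (hasDerivAt_id t).const_mul ε)
    have hGanti : AntitoneOn (fun s => D s + ε * s) (Ici T) := by
      apply antitoneOn_hasDeriv (convex_Ici T) hG
      intro t ht
      rw [interior_Ici] at ht
      have h1 := hcon t ht.le
      have h2 := hdle t (mem_Ici.mpr (le_trans hT ht.le))
      linarith
    have hDTnn : 0 ≤ D T := hDnonneg T (mem_Ici.mpr hT)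
    have ht1ge : T ≤ T + D T / ε + 1 := by
      have : 0 ≤ D T / ε := div_nonneg hDTnn hε.le
      linarith
    have hkey := hGanti self_mem_Ici (mem_Ici.mpr ht1ge) ht1ge
    have hDt1 : 0 ≤ D (T + D T / ε + 1) :=
      hDnonneg _ (mem_Ici.mpr (le_trans hT ht1ge))
    have hεDT : ε * (D T / ε) = D T := by field_simp
    nlinarith [hkey, hDt1, hεDT, hε]
  have hseq : ∀ j : ℕ, ∃ t ≥ ((j:ℝ)), f (x t) - f a < 1 / ((j:ℝ) + 1) :=
    fun j => claim1 (1 / ((j:ℝ) + 1)) (by positivity) j (Nat.cast_nonneg j)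
  choose ts hts1 hts2 using hseq
  have htsnn : ∀ j, (0:ℝ) ≤ ts j := fun j => le_trans (Nat.cast_nonneg j) (hts1 j)
  have htsC : ∀ j, x (ts j) ∈ C := fun j => (hmem _ (mem_Ici.mpr (htsnn j))).1
  have hflim : Tendsto (fun j => f (x (ts j))) atTop (𝓝 (f a)) := by
    have hub : ∀ j : ℕ, f (x (ts j)) ≤ f a + 1 / ((j:ℝ) + 1) := fun j => by
      linarith [hts2 j]
    have hlb : ∀ j : ℕ, f a ≤ f (x (ts j)) := fun j =>
      hfa_le _ (mem_Ici.mpr (htsnn j))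
    have h1 : Tendsto (fun j : ℕ => f a + 1 / ((j:ℝ) + 1)) atTop (𝓝 (f a)) := by
      have h2 : Tendsto (fun n : ℕ => 1 / ((n:ℝ) + 1)) atTop (𝓝 0) :=
        tendsto_one_div_add_atTop_nhds_zero_nat
      simpa using (tendsto_const_nhds (x := f a)).add h2
    exact tendsto_of_tendsto_of_tendsto_of_le_of_le tendsto_const_nhds h1 hlb hub
  have hlev := hBlevel a haclC (D 0)
  have hmemlev : ∀ j, x (ts j) ∈ {y ∈ C | Dh h a y ≤ D 0} := fun j =>
    ⟨htsC j, hDanti self_mem_Ici (mem_Ici.mpr (htsnn j)) (htsnn j)⟩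
  obtain ⟨xs, hxscl, φ, hφmono, hφtend0⟩ := tendsto_subseq_of_bounded hlev hmemlev
  have hφtend : Tendsto (fun j => x (ts (φ j))) atTop (𝓝 xs) := hφtend0
  have hxsF : xs ∈ closure (C ∩ {w : E n | A.mulVec w = b}) :=
    mem_closure_of_tendsto hφtend
      (Eventually.of_forall fun j => hmem _ (mem_Ici.mpr (htsnn (φ j))))
  have hfxs : f xs = f a := by
    have l1 : Tendsto (fun j => f (x (ts (φ j)))) atTop (𝓝 (f xs)) :=
      (hf.continuous.tendsto xs).comp hφtend
    have l2 : Tendsto (fun j => f (x (ts (φ j)))) atTop (𝓝 (f a)) :=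
      hflim.comp hφmono.tendsto_atTop
    exact tendsto_nhds_unique l1 l2
  have hxsa : xs = a := by
    have hmem' : xs ∈ {z ∈ closure (C ∩ {w | A.mulVec w = b}) |
        ∀ w ∈ closure (C ∩ {w | A.mulVec w = b}), f z ≤ f w} :=
      ⟨hxsF, fun w hw => hfxs ▸ hamin w hw⟩
    rw [hSP] at hmem'
    exact hmem'
  have hDsub : Tendsto (fun j => D (ts (φ j))) atTop (𝓝 0) := by
    rw [hxsa] at hφtend
    exact hBlim a haclC (fun j => x (ts (φ j))) (fun j => htsC (φ j)) hφtend
  have hDto0 : ∀ ε > (0:ℝ), ∃ T ≥ (0:ℝ), ∀ t ≥ T, D t < ε := by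
    intro ε hε
    obtain ⟨j, hj⟩ := (hDsub.eventually (gt_mem_nhds hε)).exists
    refine ⟨ts (φ j), htsnn _, fun t ht => ?_⟩
    exact lt_of_le_of_lt
      (hDanti (mem_Ici.mpr (htsnn (φ j))) (mem_Ici.mpr (le_trans (htsnn _) ht)) ht) hj
  -- convergence of the trajectory to `a`
  have hxtoa : ∀ ε > (0:ℝ), ∃ T ≥ (0:ℝ), ∀ t ≥ T, dist (x t) a < ε := by
    intro ε hε
    by_contra hcon
    push_neg at hcon
    have hs : ∀ j : ℕ, ∃ t, t ≥ ((j:ℝ)) ∧ ε ≤ dist (x t) a := by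
      intro j
      obtain ⟨t, ht1, ht2⟩ := hcon (j:ℝ) (Nat.cast_nonneg j)
      exact ⟨t, ht1, ht2⟩
    choose ss hss1 hss2 using hs
    have hssnn : ∀ j, (0:ℝ) ≤ ss j := fun j => le_trans (Nat.cast_nonneg j) (hss1 j)
    have hmem2 : ∀ j, x (ss j) ∈ {y ∈ C | Dh h a y ≤ D 0} := fun j =>
      ⟨(hmem _ (mem_Ici.mpr (hssnn j))).1,
        hDanti self_mem_Ici (mem_Ici.mpr (hssnn j)) (hssnn j)⟩
    obtain ⟨z, hzcl, ψ, hψmono, hψt0⟩ := tendsto_subseq_of_bounded hlev hmem2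
    have hψt : Tendsto (fun j => x (ss (ψ j))) atTop (𝓝 z) := hψt0
    have hzC : z ∈ closure C := mem_closure_of_tendsto hψt
      (Eventually.of_forall fun j => (hmem _ (mem_Ici.mpr (hssnn (ψ j)))).1)
    have hψD : Tendsto (fun j => Dh h a (x (ss (ψ j)))) atTop (𝓝 0) := by
      rw [Metric.tendsto_atTop]
      intro ε' hε'
      obtain ⟨T, hTnn, hT⟩ := hDto0 ε' hε'
      refine ⟨⌈T⌉₊, fun j hj => ?_⟩
      have h1 : T ≤ ss (ψ j) := by
        have h2 : ((⌈T⌉₊:ℕ):ℝ) ≤ (j:ℝ) := Nat.cast_le.mpr hj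
        have h3 : (j:ℝ) ≤ ((ψ j : ℕ):ℝ) := Nat.cast_le.mpr hψmono.le_apply
        linarith [hss1 (ψ j), Nat.le_ceil T]
      have h4 := hT _ h1
      have h5 := hDnonneg (ss (ψ j)) (mem_Ici.mpr (hssnn (ψ j)))
      rw [Real.dist_eq, sub_zero, abs_of_nonneg h5]
      exact h4
    have hza : z = a := cluster_eq hBstrict hBcont hdiffh hBlim haclC hzC
      (fun j => x (ss (ψ j)))
      (fun j => (hmem _ (mem_Ici.mpr (hssnn (ψ j)))).1) hψt hψD
    have hdist : Tendsto (fun j => dist (x (ss (ψ j))) a) atTop (𝓝 (dist z a)) :=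
      hψt.dist tendsto_const_nhds
    have hεd : ε ≤ dist z a :=
      ge_of_tendsto hdist (Eventually.of_forall fun j => hss2 (ψ j))
    rw [hza, dist_self] at hεd
    linarith
  -- enter the neighborhood `U`
  obtain ⟨ε₀, hε₀, hball⟩ := Metric.mem_nhds_iff.mp hU
  obtain ⟨T₀, hT₀nn, hT₀⟩ := hxtoa ε₀ hε₀
  have hxU : ∀ t ∈ Ici T₀, x t ∈ U ∩ C := fun t ht =>
    ⟨hball (Metric.mem_ball.mpr (hT₀ t ht)), (hmem t (mem_Ici.mpr (le_trans hT₀nn ht))).1⟩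
  have hdec : ∀ t ∈ Ici T₀, d t ≤ -α * D t ^ β := by
    intro t ht
    have h1 := hGC (x t) (hxU t ht)
    have h2 := hdle t (mem_Ici.mpr (le_trans hT₀nn ht))
    simp only [hDdef]
    linarith
  have hDerivT₀ : ∀ s ∈ Ici T₀, HasDerivAt D (d s) s := fun s hs =>
    hDeriv s (mem_Ici.mpr (le_trans hT₀nn hs))
  have hantiT₀ : AntitoneOn D (Ici T₀) := hDanti.mono (Ici_subset_Ici.mpr hT₀nn)
  have hD00 : 0 ≤ D 0 := hDnonneg 0 self_mem_Ici
  have hDT₀0 : 0 ≤ D T₀ := hDnonneg T₀ (mem_Ici.mpr hT₀nn)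
  constructor
  · -- β = 1
    intro hβ1
    subst hβ1
    refine ⟨(D 0 + D T₀ + 1) * Real.exp (α * T₀), ?_, ?_⟩
    · apply mul_pos (by linarith) (Real.exp_pos _)
    intro t ht
    show D t ≤ _
    by_cases hcase : T₀ ≤ t
    · have hGd : ∀ s ∈ Ici T₀, HasDerivAt (fun u => D u * Real.exp (α * u))
          (d s * Real.exp (α * s) + D s * (Real.exp (α * s) * α)) s := by
        intro s hs
        have he : HasDerivAt (fun u : ℝ => Real.exp (α * u)) (Real.exp (α * s) * α) s := by
          simpa [Function.comp_def] using (Real.hasDerivAt_exp (α * s)).comp s ((hasDerivAt_id s).const_mul α)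
        exact (hDerivT₀ s hs).mul he
      have hanti2 : AntitoneOn (fun u => D u * Real.exp (α * u)) (Ici T₀) := by
        apply antitoneOn_hasDeriv (convex_Ici T₀) hGd
        intro s hs
        rw [interior_Ici] at hs
        have h1 := hdec s (mem_Ici.mpr hs.le)
        rw [Real.rpow_one] at h1
        have h2 := Real.exp_pos (α * s)
        have h3 := mul_le_mul_of_nonneg_right (by linarith : d s + α * D s ≤ 0) h2.le
        nlinarith [h3]
      have hkey := hanti2 self_mem_Ici (mem_Ici.mpr hcase) hcase
      have het : 0 < Real.exp (α * t) := Real.exp_pos _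
      rw [neg_mul, Real.exp_neg, mul_comm ((D 0 + D T₀ + 1) * Real.exp (α * T₀)),
        ← div_eq_inv_mul, le_div_iff₀ het]
      have hkey' : D t * Real.exp (α * t) ≤ D T₀ * Real.exp (α * T₀) := hkey
      have h4 : 0 ≤ (D 0 + 1) * Real.exp (α * T₀) :=
        mul_nonneg (by linarith) (Real.exp_pos _).le
      nlinarith [hkey', h4]
    · push_neg at hcase
      have h1 : D t ≤ D 0 := hDanti self_mem_Ici (mem_Ici.mpr ht.le) ht.le
      have h2 : Real.exp (α * T₀) * Real.exp (-α * t) = Real.exp (α * T₀ - α * t) := by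
        rw [← Real.exp_add]; ring_nf
      have h3 : (1:ℝ) ≤ Real.exp (α * T₀ - α * t) := by
        apply Real.one_le_exp
        have h4 := mul_nonneg hα.le (sub_nonneg.mpr hcase.le)
        nlinarith [h4]
      rw [mul_assoc, h2]
      have h5 : (D 0 + D T₀ + 1) * 1 ≤ (D 0 + D T₀ + 1) * Real.exp (α * T₀ - α * t) :=
        mul_le_mul_of_nonneg_left h3 (by linarith)
      linarith [h1, h5]
  · -- β > 1
    intro hβ1
    have hq0 : 0 < 1 / (β - 1) := div_pos one_pos (by linarith)
    have hc2pos : 0 < (α * (β - 1) / 2) ^ (-(1 / (β - 1))) :=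
      Real.rpow_pos_of_pos (div_pos (mul_pos hα (by linarith)) two_pos) _
    have h2T : (0:ℝ) < 2 * T₀ + 2 := by linarith
    have hbase : 0 ≤ (2 * T₀ + 2 : ℝ) ^ (1 / (β - 1)) := Real.rpow_nonneg h2T.le _
    refine ⟨D 0 * (2 * T₀ + 2) ^ (1 / (β - 1)) + (α * (β - 1) / 2) ^ (-(1 / (β - 1))) + 1,
      ?_, ?_⟩
    · have := mul_nonneg hD00 hbase
      linarith
    intro t ht
    show D t ≤ _
    have htq : 0 < t ^ (1 / (β - 1)) := Real.rpow_pos_of_pos ht _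
    have hK'pos : 0 < D 0 * (2 * T₀ + 2) ^ (1 / (β - 1))
        + (α * (β - 1) / 2) ^ (-(1 / (β - 1))) + 1 := by
      have := mul_nonneg hD00 hbase
      linarith
    by_cases hDt : D t ≤ 0
    · exact le_trans hDt (le_of_lt (div_pos hK'pos htq))
    push_neg at hDt
    by_cases hbig : 2 * T₀ + 2 ≤ t
    · have ht₁ : T₀ < t := by linarith
      have hPD := power_decay hβ1 hα hDerivT₀ hantiT₀ hdec ht₁ hDt
      have hhalfpos : 0 < α * (β - 1) * (t / 2) :=
        mul_pos (mul_pos hα (by linarith)) (by linarith)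
      have hhalf : α * (β - 1) * (t / 2) ≤ α * (β - 1) * (t - T₀) :=
        mul_le_mul_of_nonneg_left (by linarith) (le_of_lt (mul_pos hα (by linarith)))
      have h6 : (α * (β - 1) * (t - T₀)) ^ (-(1 / (β - 1)))
          ≤ (α * (β - 1) * (t / 2)) ^ (-(1 / (β - 1))) :=
        Real.rpow_le_rpow_of_nonpos hhalfpos hhalf (by linarith)
      have h7 : (α * (β - 1) * (t / 2)) ^ (-(1 / (β - 1)))
          = (α * (β - 1) / 2) ^ (-(1 / (β - 1))) * t ^ (-(1 / (β - 1))) := by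
        rw [show α * (β - 1) * (t / 2) = (α * (β - 1) / 2) * t by ring,
          Real.mul_rpow (le_of_lt (div_pos (mul_pos hα (by linarith)) two_pos)) ht.le]
      have h8 : t ^ (-(1 / (β - 1))) = (t ^ (1 / (β - 1)))⁻¹ := Real.rpow_neg ht.le _
      rw [div_eq_mul_inv, ← h8]
      have h9 : (α * (β - 1) / 2) ^ (-(1 / (β - 1))) * t ^ (-(1 / (β - 1)))
          ≤ (D 0 * (2 * T₀ + 2) ^ (1 / (β - 1)) + (α * (β - 1) / 2) ^ (-(1 / (β - 1))) + 1)
            * t ^ (-(1 / (β - 1))) := by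
        apply mul_le_mul_of_nonneg_right _ (Real.rpow_nonneg ht.le _)
        have := mul_nonneg hD00 hbase
        linarith
      calc D t ≤ (α * (β - 1) * (t - T₀)) ^ (-(1 / (β - 1))) := hPD
        _ ≤ (α * (β - 1) * (t / 2)) ^ (-(1 / (β - 1))) := h6
        _ = (α * (β - 1) / 2) ^ (-(1 / (β - 1))) * t ^ (-(1 / (β - 1))) := h7
        _ ≤ _ := h9
    · push_neg at hbig
      have h1 : D t ≤ D 0 := hDanti self_mem_Ici (mem_Ici.mpr ht.le) ht.le
      have h2 : t ^ (1 / (β - 1)) ≤ (2 * T₀ + 2) ^ (1 / (β - 1)) :=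
        Real.rpow_le_rpow ht.le hbig.le hq0.le
      rw [le_div_iff₀ htq]
      have h3 : D t * t ^ (1 / (β - 1)) ≤ D 0 * (2 * T₀ + 2) ^ (1 / (β - 1)) :=
        mul_le_mul h1 h2 htq.le hD00
      linarith [hc2pos]
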